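/- Fix β ≥ 0 and for λ > 0 set μ(λ) = (0, −2β, −β − λ/2) ∈ ℝ³. Then as λ → +∞: z₁(μ(λ)) → 1/2 + I₁(β)/(2 I₀(β)), z₂(μ(λ)) → 1/2 − I₁(β)/(2 I₀(β)), and z₃(μ(λ)) → 0. (As one exponent of a three-dimensional Bingham distribution tends to −∞, the second moments converge to those of a two-dimensional Bingham distribution.) -/

import Mathlib

open Real Filter intervalIntegral Set

private lemma tendsto_sqrt_atTop' : Tendsto Real.sqrt atTop atTop := by
  refine tendsto_atTop.2 fun b => eventually_atTop.2 ⟨(max b 0)^2, fun a ha => ?_⟩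
  calc b ≤ max b 0 := le_max_left _ _
  _ = Real.sqrt ((max b 0)^2) := (Real.sqrt_sq (le_max_right _ _)).symm
  _ ≤ Real.sqrt a := Real.sqrt_le_sqrt ha

private lemma bingham_ratio_tendsto {F G : ℝ → ℝ} {c K g₀ : ℝ} (hg₀ : 0 < g₀)
    (hF : Continuous F) (hG : Continuous G)
    (hGlb : ∀ t ∈ Icc (-1:ℝ) 1, g₀ ≤ G t)
    (hK : ∀ t ∈ Icc (-1:ℝ) 1, |F t - c * G t| ≤ K * t^2) :
    Tendsto (fun lam : ℝ => (∫ t in (-1:ℝ)..1, F t * Real.exp (-(lam * t^2)/2)) /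
      (∫ t in (-1:ℝ)..1, G t * Real.exp (-(lam * t^2)/2))) atTop (nhds c) := by
  have hK0 : 0 ≤ K := by
    have := hK 1 (by norm_num)
    have h0 : (0:ℝ) ≤ |F 1 - c * G 1| := abs_nonneg _
    nlinarith
  set C : ℝ := 2 * K * Real.exp (1/2) / g₀ with hC
  have hCnn : 0 ≤ C := by positivity
  have hbound : ∀ᶠ lam in atTop, |(∫ t in (-1:ℝ)..1, F t * Real.exp (-(lam * t^2)/2)) /
      (∫ t in (-1:ℝ)..1, G t * Real.exp (-(lam * t^2)/2)) - c| ≤ C / Real.sqrt lam := by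
    filter_upwards [eventually_ge_atTop (1:ℝ)] with lam hlam
    have hlam0 : (0:ℝ) < lam := lt_of_lt_of_le one_pos hlam
    have hs : (0:ℝ) < Real.sqrt lam := Real.sqrt_pos.2 hlam0
    set r : ℝ := 1 / Real.sqrt lam with hr
    have hr0 : 0 < r := by positivity
    have hr1 : r ≤ 1 := by
      rw [hr, div_le_one hs]
      calc (1:ℝ) = Real.sqrt 1 := Real.sqrt_one.symm
      _ ≤ Real.sqrt lam := Real.sqrt_le_sqrt hlam
    have hFi : ∀ a b : ℝ, IntervalIntegrable (fun t => F t * Real.exp (-(lam * t^2)/2)) MeasureTheory.volume a b :=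
      fun a b => (hF.mul (by continuity)).intervalIntegrable a b
    have hGi : ∀ a b : ℝ, IntervalIntegrable (fun t => G t * Real.exp (-(lam * t^2)/2)) MeasureTheory.volume a b :=
      fun a b => (hG.mul (by continuity)).intervalIntegrable a b
    set N : ℝ := ∫ t in (-1:ℝ)..1, F t * Real.exp (-(lam * t^2)/2) with hN
    set D : ℝ := ∫ t in (-1:ℝ)..1, G t * Real.exp (-(lam * t^2)/2) with hD
    -- lower bound for D
    have hDlb : 2 * g₀ * Real.exp (-(1:ℝ)/2) / Real.sqrt lam ≤ D := by
      have step1 : (∫ t in (-r)..r, G t * Real.exp (-(lam * t^2)/2)) ≤ D := by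
        apply integral_mono_interval (by linarith) (by linarith) (by linarith)
        · refine MeasureTheory.ae_restrict_of_forall_mem measurableSet_Ioc fun t ht => ?_
          have := hGlb t ⟨ht.1.le, ht.2⟩
          exact mul_nonneg (hg₀.le.trans this) (Real.exp_nonneg _)
        · exact hGi _ _
      have hlr2 : lam * r^2 = 1 := by
        rw [hr]; field_simp [Real.sq_sqrt hlam0.le]; rw [Real.sq_sqrt hlam0.le]
      have step2 : 2 * g₀ * Real.exp (-(1:ℝ)/2) / Real.sqrt lam
          ≤ ∫ t in (-r)..r, G t * Real.exp (-(lam * t^2)/2) := by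
        have hmono : (∫ _t in (-r)..r, g₀ * Real.exp (-(1:ℝ)/2))
            ≤ ∫ t in (-r)..r, G t * Real.exp (-(lam * t^2)/2) := by
          apply integral_mono_on (by linarith) (intervalIntegrable_const) (hGi _ _)
          intro t ht
          have ht1 : t^2 ≤ r^2 := sq_le_sq' (by linarith [ht.1]) ht.2
          have hGt : g₀ ≤ G t := hGlb t ⟨by linarith [ht.1], by linarith [ht.2]⟩
          have hexp : Real.exp (-(1:ℝ)/2) ≤ Real.exp (-(lam * t^2)/2) := by
            apply Real.exp_le_exp.2
            have : lam * t^2 ≤ 1 := by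
              calc lam * t^2 ≤ lam * r^2 := by nlinarith
              _ = 1 := hlr2
            linarith
          exact mul_le_mul hGt hexp (Real.exp_nonneg _) (hg₀.le.trans hGt)
        calc 2 * g₀ * Real.exp (-(1:ℝ)/2) / Real.sqrt lam
            = (r - (-r)) * (g₀ * Real.exp (-(1:ℝ)/2)) := by rw [hr]; field_simp; ring
        _ = ∫ _t in (-r)..r, g₀ * Real.exp (-(1:ℝ)/2) := by
            rw [integral_const, smul_eq_mul]
        _ ≤ _ := hmono
      linarith
    have hDpos : 0 < D := lt_of_lt_of_le (by positivity) hDlb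
    -- upper bound for |N - c * D|
    have hdiff : |N - c * D| ≤ 4 * K / lam := by
      have hsub : N - c * D = ∫ t in (-1:ℝ)..1,
          (F t * Real.exp (-(lam * t^2)/2) - c * (G t * Real.exp (-(lam * t^2)/2))) := by
        rw [integral_sub (hFi _ _) ((hGi _ _).const_mul c), integral_const_mul]
      rw [hsub]
      have : ‖∫ t in (-1:ℝ)..1,
          (F t * Real.exp (-(lam * t^2)/2) - c * (G t * Real.exp (-(lam * t^2)/2)))‖
          ≤ 2 * K / lam * |1 - (-1:ℝ)| := by
        apply intervalIntegral.norm_integral_le_of_norm_le_const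
        intro t ht
        have ht' : t ∈ Set.Icc (-1:ℝ) 1 := by
          have := Set.uIoc_of_le (by norm_num : (-1:ℝ) ≤ 1) ▸ ht
          exact ⟨this.1.le, this.2⟩
        have h1 : ‖F t * Real.exp (-(lam * t^2)/2) - c * (G t * Real.exp (-(lam * t^2)/2))‖
            = |F t - c * G t| * Real.exp (-(lam * t^2)/2) := by
          rw [Real.norm_eq_abs, show F t * Real.exp (-(lam * t^2)/2) -
              c * (G t * Real.exp (-(lam * t^2)/2))
              = (F t - c * G t) * Real.exp (-(lam * t^2)/2) by ring, abs_mul,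
            abs_of_nonneg (Real.exp_nonneg _)]
        rw [h1]
        have h2 : |F t - c * G t| * Real.exp (-(lam * t^2)/2)
            ≤ K * t^2 * Real.exp (-(lam * t^2)/2) :=
          mul_le_mul_of_nonneg_right (hK t ht') (Real.exp_nonneg _)
        have hxe : lam * t^2/2 * Real.exp (-(lam * t^2)/2) ≤ 1 := by
          have h5 : lam * t^2/2 ≤ Real.exp (lam * t^2/2) := by
            have := Real.add_one_le_exp (lam * t^2/2); linarith
          have h6 : Real.exp (lam * t^2/2) * Real.exp (-(lam * t^2)/2) = 1 := by
            rw [← Real.exp_add, show lam * t^2/2 + -(lam * t^2)/2 = 0 by ring, Real.exp_zero]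
          calc lam * t^2/2 * Real.exp (-(lam * t^2)/2)
              ≤ Real.exp (lam * t^2/2) * Real.exp (-(lam * t^2)/2) :=
                mul_le_mul_of_nonneg_right h5 (Real.exp_nonneg _)
          _ = 1 := h6
        have h3 : K * t^2 * Real.exp (-(lam * t^2)/2) ≤ 2 * K / lam := by
          have h7 := mul_le_mul_of_nonneg_left hxe
            (div_nonneg (by linarith : (0:ℝ) ≤ 2 * K) hlam0.le)
          calc K * t^2 * Real.exp (-(lam * t^2)/2)
              = 2 * K / lam * (lam * t^2/2 * Real.exp (-(lam * t^2)/2)) := by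
                field_simp
          _ ≤ 2 * K / lam * 1 := h7
          _ = 2 * K / lam := mul_one _
        linarith
      rw [Real.norm_eq_abs] at this
      calc |_| ≤ 2 * K / lam * |1 - (-1:ℝ)| := this
      _ = 4 * K / lam := by norm_num; ring
    -- combine
    have hratio : |N / D - c| ≤ C / Real.sqrt lam := by
      have heq : N / D - c = (N - c * D) / D := by field_simp
      rw [heq, abs_div, abs_of_pos hDpos]
      have hden : 0 < 2 * g₀ * Real.exp (-(1:ℝ)/2) / Real.sqrt lam :=
        div_pos (mul_pos (mul_pos two_pos hg₀) (Real.exp_pos _)) hs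
      have hss : Real.sqrt lam * Real.sqrt lam = lam := Real.mul_self_sqrt hlam0.le
      calc |N - c * D| / D ≤ (4 * K / lam) / (2 * g₀ * Real.exp (-(1:ℝ)/2) / Real.sqrt lam) :=
            div_le_div₀ (div_nonneg (by linarith) hlam0.le) hdiff hden hDlb
      _ = C / Real.sqrt lam := by
            have h1 : (4 * K / lam) * Real.sqrt lam = 4 * K / Real.sqrt lam := by
              rw [eq_div_iff hs.ne', mul_assoc, hss, div_mul_cancel₀ _ hlam0.ne']
            have h2 : C * (2 * g₀ * Real.exp (-(1:ℝ)/2) / Real.sqrt lam)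
                = 4 * K / Real.sqrt lam := by
              rw [hC, show Real.exp (-(1:ℝ)/2) = (Real.exp ((1:ℝ)/2))⁻¹ by
                rw [← Real.exp_neg]; norm_num]
              field_simp
              ring
            rw [div_eq_div_iff hden.ne' hs.ne', h1]
            exact h2.symm
    exact hratio
  have hlim : Tendsto (fun lam : ℝ => C / Real.sqrt lam) atTop (nhds 0) :=
    Tendsto.div_atTop tendsto_const_nhds tendsto_sqrt_atTop'
  rw [← tendsto_sub_nhds_zero_iff]
  apply squeeze_zero_norm' _ hlim
  filter_upwards [hbound] with lam h using h


/-- Integral of a function over the unit sphere `S² ⊂ ℝ³` with respect to the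
surface measure, written in spherical coordinates
`m = (sin θ cos φ, sin θ sin φ, cos θ)` with surface element `sin θ dφ dθ`. -/
noncomputable def sphereIntegral (f : (Fin 3 → ℝ) → ℝ) : ℝ :=
  ∫ θ in (0:ℝ)..Real.pi, ∫ φ in (0:ℝ)..(2 * Real.pi),
    f ![Real.sin θ * Real.cos φ, Real.sin θ * Real.sin φ, Real.cos θ] * Real.sin θ

/-- The Bingham normalizing constant
`Z(μ) = (1/(4π)) ∫_{S²} exp(μ₁ m₁² + μ₂ m₂² + μ₃ m₃²) dσ(m)`. -/
noncomputable def binghamZ (μ : Fin 3 → ℝ) : ℝ :=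
  (1 / (4 * Real.pi)) * sphereIntegral (fun m => Real.exp (∑ i, μ i * (m i) ^ 2))

/-- The second moments of the Bingham distribution:
`zᵢ(μ) = (1/(4π Z(μ))) ∫_{S²} mᵢ² exp(μ₁ m₁² + μ₂ m₂² + μ₃ m₃²) dσ(m)`. -/
noncomputable def binghamZ2 (μ : Fin 3 → ℝ) (i : Fin 3) : ℝ :=
  (1 / (4 * Real.pi * binghamZ μ)) *
    sphereIntegral (fun m => (m i) ^ 2 * Real.exp (∑ j, μ j * (m j) ^ 2))

/-- The modified Bessel function of integer order `n`:
`Iₙ(μ) = (1/(2π)) ∫₀^{2π} e^{μ cos θ} cos (n θ) dθ`. -/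
noncomputable def besselI (n : ℤ) (μ : ℝ) : ℝ :=
  (1 / (2 * Real.pi)) * ∫ θ in (0:ℝ)..(2 * Real.pi),
    Real.exp (μ * Real.cos θ) * Real.cos ((n : ℝ) * θ)

noncomputable def binghamKer (β t φ : ℝ) : ℝ :=
  Real.exp (-(β * t^2) - 2*β*(1-t^2)*Real.sin φ^2)

noncomputable def binghamF (β : ℝ) (w : ℝ → ℝ → ℝ) (t : ℝ) : ℝ :=
  ∫ φ in (0:ℝ)..(2*Real.pi), w t φ * binghamKer β t φ

lemma binghamKer_cont (β : ℝ) : Continuous (fun p : ℝ × ℝ => binghamKer β p.1 p.2) := by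
  unfold binghamKer; fun_prop

lemma binghamKer_cont1 (β t : ℝ) : Continuous (fun φ => binghamKer β t φ) := by
  unfold binghamKer; fun_prop

lemma binghamF_cont (β : ℝ) (w : ℝ → ℝ → ℝ) (hw : Continuous fun p : ℝ × ℝ => w p.1 p.2) :
    Continuous (binghamF β w) := by
  have : Continuous (Function.uncurry fun t φ => w t φ * binghamKer β t φ) :=
    hw.mul (binghamKer_cont β)
  exact intervalIntegral.continuous_parametric_intervalIntegral_of_continuous' this 0 (2*Real.pi)

lemma binghamKer_le_one (β : ℝ) (hβ : 0 ≤ β) {t : ℝ} (ht : t ∈ Icc (-1:ℝ) 1) (φ : ℝ) :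
    binghamKer β t φ ≤ 1 := by
  rw [binghamKer, Real.exp_le_one_iff]
  have h1 : t^2 ≤ 1 := by nlinarith [ht.1, ht.2]
  nlinarith [mul_nonneg hβ (sq_nonneg t),
    mul_nonneg (mul_nonneg hβ (sub_nonneg.2 h1)) (sq_nonneg (Real.sin φ))]

lemma binghamKer_pos (β t φ : ℝ) : 0 < binghamKer β t φ := Real.exp_pos _

lemma binghamKer_ge (β : ℝ) (hβ : 0 ≤ β) {t : ℝ} (ht : t ∈ Icc (-1:ℝ) 1) (φ : ℝ) :
    Real.exp (-(3*β)) ≤ binghamKer β t φ := by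
  rw [binghamKer, Real.exp_le_exp]
  have h1 : t^2 ≤ 1 := by nlinarith [ht.1, ht.2]
  have h2 : Real.sin φ^2 ≤ 1 := sin_sq_le_one φ
  have h3 : (1-t^2) * Real.sin φ^2 ≤ 1 := by nlinarith [sq_nonneg (Real.sin φ)]
  nlinarith [mul_le_mul_of_nonneg_left h3 hβ, mul_le_mul_of_nonneg_left h1 hβ]

lemma binghamKer_diff (β : ℝ) (hβ : 0 ≤ β) {t : ℝ} (ht : t ∈ Icc (-1:ℝ) 1) (φ : ℝ) :
    |binghamKer β t φ - binghamKer β 0 φ| ≤ β * t^2 := by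
  have h1 : t^2 ≤ 1 := by nlinarith [ht.1, ht.2]
  have h2 : Real.sin φ^2 ≤ 1 := sin_sq_le_one φ
  have hx : -(β * t^2) - 2*β*(1-t^2)*Real.sin φ^2 ≤ 0 := by
    nlinarith [mul_nonneg hβ (sq_nonneg t),
      mul_nonneg (mul_nonneg hβ (sub_nonneg.2 h1)) (sq_nonneg (Real.sin φ))]
  have hy : -(β * 0^2) - 2*β*(1-0^2)*Real.sin φ^2 ≤ 0 := by
    nlinarith [mul_nonneg hβ (sq_nonneg (Real.sin φ))]
  have key : ∀ x y : ℝ, x ≤ 0 → y ≤ 0 → |Real.exp x - Real.exp y| ≤ |x - y| := by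
    intro x y hx hy
    wlog h : y ≤ x generalizing x y
    · rw [abs_sub_comm, abs_sub_comm x y]; exact this y x hy hx (le_of_not_ge h)
    rw [abs_of_nonneg (sub_nonneg.2 (Real.exp_le_exp.2 h)), abs_of_nonneg (sub_nonneg.2 h)]
    have h1 : Real.exp x - Real.exp y = Real.exp x * (1 - Real.exp (y - x)) := by
      rw [mul_sub, mul_one, ← Real.exp_add]; ring_nf
    rw [h1]
    have h2 : 1 - Real.exp (y - x) ≤ x - y := by
      have := Real.add_one_le_exp (y - x); linarith
    have h3 : Real.exp x ≤ 1 := Real.exp_le_one_iff.2 hx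
    have h4 : 0 ≤ 1 - Real.exp (y - x) := by
      have := Real.exp_le_one_iff.2 (by linarith : y - x ≤ 0); linarith
    calc Real.exp x * (1 - Real.exp (y-x)) ≤ 1 * (x - y) := mul_le_mul h3 h2 h4 zero_le_one
    _ = x - y := one_mul _
  calc |binghamKer β t φ - binghamKer β 0 φ|
      ≤ |(-(β * t^2) - 2*β*(1-t^2)*Real.sin φ^2) - (-(β * 0^2) - 2*β*(1-0^2)*Real.sin φ^2)| :=
        key _ _ hx hy
  _ = |β * t^2 * (2 * Real.sin φ^2 - 1)| := by ring_nf
  _ ≤ β * t^2 := by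
      rw [abs_mul, abs_of_nonneg (by positivity : (0:ℝ) ≤ β * t^2)]
      have : |2 * Real.sin φ^2 - 1| ≤ 1 := by
        rw [abs_le]; constructor <;> nlinarith [sq_nonneg (Real.sin φ)]
      exact mul_le_of_le_one_right (by positivity) this

lemma binghamF_sub_bound (β : ℝ) (w : ℝ → ℝ → ℝ)
    (hw : Continuous fun p : ℝ × ℝ => w p.1 p.2) (Cb t : ℝ)
    (hb : ∀ φ, |w t φ * binghamKer β t φ - w 0 φ * binghamKer β 0 φ| ≤ Cb) :
    |binghamF β w t - binghamF β w 0| ≤ Cb * (2 * Real.pi) := by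
  have hct : ∀ s : ℝ, Continuous fun φ => w s φ * binghamKer β s φ := by
    intro s
    have h1 : Continuous fun φ : ℝ => w s φ := hw.comp (Continuous.prodMk_right s)
    exact h1.mul (binghamKer_cont1 β s)
  rw [binghamF, binghamF, ← intervalIntegral.integral_sub
    ((hct t).intervalIntegrable _ _) ((hct 0).intervalIntegrable _ _)]
  have key : ‖∫ φ in (0:ℝ)..(2*Real.pi),
      (w t φ * binghamKer β t φ - w 0 φ * binghamKer β 0 φ)‖ ≤ Cb * |2*Real.pi - 0| := by
    apply intervalIntegral.norm_integral_le_of_norm_le_const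
    intro φ _
    rw [Real.norm_eq_abs]; exact hb φ
  rw [Real.norm_eq_abs] at key
  calc |_| ≤ Cb * |2*Real.pi - 0| := key
  _ = Cb * (2*Real.pi) := by rw [sub_zero, abs_of_nonneg (by positivity)]

lemma binghamG_lb (β : ℝ) (hβ : 0 ≤ β) :
    ∀ t ∈ Icc (-1:ℝ) 1, 2*Real.pi*Real.exp (-(3*β)) ≤ binghamF β (fun _ _ => 1) t := by
  intro t ht
  have h1 : (∫ _φ in (0:ℝ)..(2*Real.pi), Real.exp (-(3*β)))
      ≤ ∫ φ in (0:ℝ)..(2*Real.pi), (fun _ _ => (1:ℝ)) t φ * binghamKer β t φ := by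
    apply intervalIntegral.integral_mono_on (by positivity) intervalIntegrable_const
      ((continuous_const.mul (binghamKer_cont1 β t)).intervalIntegrable _ _)
    intro φ _
    simpa using binghamKer_ge β hβ ht φ
  rw [intervalIntegral.integral_const, smul_eq_mul, sub_zero] at h1
  exact le_trans (le_of_eq (by ring)) h1

lemma binghamG_ub (β : ℝ) (hβ : 0 ≤ β) :
    ∀ t ∈ Icc (-1:ℝ) 1, binghamF β (fun _ _ => 1) t ≤ 2*Real.pi := by
  intro t ht
  have h1 : (∫ φ in (0:ℝ)..(2*Real.pi), (fun _ _ => (1:ℝ)) t φ * binghamKer β t φ)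
      ≤ ∫ _φ in (0:ℝ)..(2*Real.pi), (1:ℝ) := by
    apply intervalIntegral.integral_mono_on (by positivity)
      ((continuous_const.mul (binghamKer_cont1 β t)).intervalIntegrable _ _)
      intervalIntegrable_const
    intro φ _
    simpa using binghamKer_le_one β hβ ht φ
  rw [intervalIntegral.integral_const, smul_eq_mul, sub_zero, mul_one] at h1
  exact h1

lemma double_angle_integral (f : ℝ → ℝ) (hper : Function.Periodic f (2*Real.pi))
    (hcont : Continuous f) :
    ∫ φ in (0:ℝ)..(2*Real.pi), f (2*φ) = ∫ ψ in (0:ℝ)..(2*Real.pi), f ψ := by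
  rw [intervalIntegral.integral_comp_mul_left f two_ne_zero]
  rw [mul_zero, show (2:ℝ)*(2*Real.pi) = 2*Real.pi + 2*Real.pi by ring]
  rw [← intervalIntegral.integral_add_adjacent_intervals
    (hcont.intervalIntegrable 0 (2*Real.pi))
    (hcont.intervalIntegrable (2*Real.pi) (2*Real.pi + 2*Real.pi))]
  rw [show ∫ x in (2*Real.pi)..(2*Real.pi + 2*Real.pi), f x
      = ∫ x in (0:ℝ)..(0 + 2*Real.pi), f x from hper.intervalIntegral_add_eq (2*Real.pi) 0]
  rw [zero_add, smul_eq_mul]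
  ring

lemma int_exp_cos2 (β : ℝ) :
    ∫ φ in (0:ℝ)..(2*Real.pi), Real.exp (β * Real.cos (2*φ)) = 2*Real.pi * besselI 0 β := by
  have hper : Function.Periodic (fun ψ => Real.exp (β * Real.cos ψ)) (2*Real.pi) :=
    fun x => by simp [Real.cos_periodic x]
  have h := double_angle_integral _ hper (by fun_prop)
  rw [h, besselI]
  have : ∀ θ : ℝ, Real.exp (β * Real.cos θ) * Real.cos (((0:ℤ):ℝ) * θ)
      = Real.exp (β * Real.cos θ) := by intro θ; norm_num
  simp_rw [this]
  field_simp

lemma int_exp_cos2_mul (β : ℝ) :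
    ∫ φ in (0:ℝ)..(2*Real.pi), Real.exp (β * Real.cos (2*φ)) * Real.cos (2*φ)
      = 2*Real.pi * besselI 1 β := by
  have hper : Function.Periodic (fun ψ => Real.exp (β * Real.cos ψ) * Real.cos ψ) (2*Real.pi) :=
    fun x => by simp [Real.cos_periodic x]
  have h := double_angle_integral _ hper (by fun_prop)
  rw [h, besselI]
  have : ∀ θ : ℝ, Real.exp (β * Real.cos θ) * Real.cos (((1:ℤ):ℝ) * θ)
      = Real.exp (β * Real.cos θ) * Real.cos θ := by intro θ; norm_num
  simp_rw [this]
  field_simp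

lemma besselI0_pos (β : ℝ) : 0 < besselI 0 β := by
  rw [besselI]
  have h1 : (0:ℝ) < ∫ θ in (0:ℝ)..(2*Real.pi), Real.exp (β * Real.cos θ) * Real.cos (((0:ℤ):ℝ) * θ) := by
    apply intervalIntegral.intervalIntegral_pos_of_pos
      (Continuous.intervalIntegrable (by fun_prop) _ _) ?_ (by positivity)
    intro x
    norm_num
    exact Real.exp_pos _
  positivity

lemma ker_zero_eq (β φ : ℝ) :
    binghamKer β 0 φ = Real.exp (-β) * Real.exp (β * Real.cos (2*φ)) := by
  rw [binghamKer, ← Real.exp_add]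
  congr 1
  linear_combination (-2*β) * (Real.sin_sq φ) + (-β) * (Real.cos_two_mul φ)

lemma binghamG0_val (β : ℝ) :
    binghamF β (fun _ _ => 1) 0 = 2*Real.pi * Real.exp (-β) * besselI 0 β := by
  rw [binghamF]
  have : ∀ φ : ℝ, (fun _ _ => (1:ℝ)) 0 φ * binghamKer β 0 φ
      = Real.exp (-β) * Real.exp (β * Real.cos (2*φ)) := fun φ => by
    rw [ker_zero_eq]; ring
  simp_rw [this]
  rw [intervalIntegral.integral_const_mul, int_exp_cos2]
  ring

lemma binghamF0_val (β : ℝ) :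
    binghamF β (fun t φ => (1 - t^2) * Real.cos φ^2) 0
      = Real.pi * Real.exp (-β) * (besselI 0 β + besselI 1 β) := by
  rw [binghamF]
  have : ∀ φ : ℝ, (1 - (0:ℝ)^2) * Real.cos φ^2 * binghamKer β 0 φ
      = Real.exp (-β) * ((1/2) * Real.exp (β * Real.cos (2*φ))
        + (1/2) * (Real.exp (β * Real.cos (2*φ)) * Real.cos (2*φ))) := fun φ => by
    rw [ker_zero_eq, Real.cos_sq φ]; ring
  simp_rw [this]
  rw [intervalIntegral.integral_const_mul, intervalIntegral.integral_add
    ((by fun_prop : Continuous fun φ : ℝ => (1/2) * Real.exp (β * Real.cos (2*φ))).intervalIntegrable _ _)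
    ((by fun_prop : Continuous fun φ : ℝ => (1/2) * (Real.exp (β * Real.cos (2*φ)) * Real.cos (2*φ))).intervalIntegrable _ _),
    intervalIntegral.integral_const_mul, intervalIntegral.integral_const_mul,
    int_exp_cos2, int_exp_cos2_mul]
  ring

lemma binghamF1_val (β : ℝ) :
    binghamF β (fun t φ => (1 - t^2) * Real.sin φ^2) 0
      = Real.pi * Real.exp (-β) * (besselI 0 β - besselI 1 β) := by
  rw [binghamF]
  have : ∀ φ : ℝ, (1 - (0:ℝ)^2) * Real.sin φ^2 * binghamKer β 0 φ
      = Real.exp (-β) * ((1/2) * Real.exp (β * Real.cos (2*φ))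
        - (1/2) * (Real.exp (β * Real.cos (2*φ)) * Real.cos (2*φ))) := fun φ => by
    rw [ker_zero_eq, Real.sin_sq φ, Real.cos_sq φ]; ring
  simp_rw [this]
  rw [intervalIntegral.integral_const_mul, intervalIntegral.integral_sub
    ((by fun_prop : Continuous fun φ : ℝ => (1/2) * Real.exp (β * Real.cos (2*φ))).intervalIntegrable _ _)
    ((by fun_prop : Continuous fun φ : ℝ => (1/2) * (Real.exp (β * Real.cos (2*φ)) * Real.cos (2*φ))).intervalIntegrable _ _),
    intervalIntegral.integral_const_mul, intervalIntegral.integral_const_mul,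
    int_exp_cos2, int_exp_cos2_mul]
  ring

lemma binghamF2_val (β : ℝ) :
    binghamF β (fun t _ => t^2) 0 = 0 := by
  rw [binghamF]
  simp

lemma sphere_reduce (β lam : ℝ) (w : ℝ → ℝ → ℝ)
    (hw : Continuous fun p : ℝ × ℝ => w p.1 p.2) (f : (Fin 3 → ℝ) → ℝ)
    (hf : ∀ θ φ : ℝ, f ![Real.sin θ * Real.cos φ, Real.sin θ * Real.sin φ, Real.cos θ]
        = w (Real.cos θ) φ * binghamKer β (Real.cos θ) φ
          * Real.exp (-(lam * Real.cos θ^2)/2)) :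
    sphereIntegral f = ∫ t in (-1:ℝ)..1, binghamF β w t * Real.exp (-(lam * t^2)/2) := by
  have hH : Continuous fun t => binghamF β w t * Real.exp (-(lam * t^2)/2) :=
    (binghamF_cont β w hw).mul (by fun_prop)
  have step1 : ∀ θ : ℝ, (∫ φ in (0:ℝ)..(2*Real.pi),
      f ![Real.sin θ * Real.cos φ, Real.sin θ * Real.sin φ, Real.cos θ] * Real.sin θ)
      = (binghamF β w (Real.cos θ) * Real.exp (-(lam * Real.cos θ^2)/2)) * Real.sin θ := by
    intro θ
    have heq : ∀ φ : ℝ, f ![Real.sin θ * Real.cos φ, Real.sin θ * Real.sin φ, Real.cos θ]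
        * Real.sin θ = (w (Real.cos θ) φ * binghamKer β (Real.cos θ) φ)
        * (Real.exp (-(lam * Real.cos θ^2)/2) * Real.sin θ) := fun φ => by
      rw [hf θ φ]; ring
    rw [intervalIntegral.integral_congr (fun φ _ => heq φ),
      intervalIntegral.integral_mul_const, binghamF]
    ring
  rw [sphereIntegral]
  simp_rw [step1]
  have hsub := intervalIntegral.integral_comp_smul_deriv (a := (0:ℝ)) (b := Real.pi)
    (f := Real.cos) (f' := fun x => -Real.sin x)
    (g := fun t => binghamF β w t * Real.exp (-(lam * t^2)/2))
    (fun x _ => Real.hasDerivAt_cos x) (Continuous.continuousOn (by fun_prop)) hH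
  simp only [Function.comp_apply, smul_eq_mul] at hsub
  rw [Real.cos_zero, Real.cos_pi, intervalIntegral.integral_symm (-1:ℝ) 1] at hsub
  have l1 : (∫ x in (0:ℝ)..Real.pi,
      -Real.sin x * (binghamF β w (Real.cos x) * Real.exp (-(lam * Real.cos x^2)/2)))
      = -∫ x in (0:ℝ)..Real.pi,
        binghamF β w (Real.cos x) * Real.exp (-(lam * Real.cos x^2)/2) * Real.sin x := by
    rw [← intervalIntegral.integral_neg]
    apply intervalIntegral.integral_congr
    intro x _
    ring
  rw [l1] at hsub
  linarith [hsub]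

lemma exp_sum_eq (β lam θ φ : ℝ) :
    Real.exp (∑ j, (![0, -2*β, -β - lam/2] : Fin 3 → ℝ) j *
      ((![Real.sin θ * Real.cos φ, Real.sin θ * Real.sin φ, Real.cos θ] : Fin 3 → ℝ) j)^2)
    = binghamKer β (Real.cos θ) φ * Real.exp (-(lam * Real.cos θ^2)/2) := by
  rw [binghamKer, ← Real.exp_add]
  congr 1
  simp only [Fin.sum_univ_three, Matrix.cons_val_zero, Matrix.cons_val_one, Matrix.head_cons,
    Matrix.cons_val_two, Matrix.tail_cons]
  linear_combination (-2*β*Real.sin φ^2) * Real.sin_sq θ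

lemma binghamZ2_eq (μ : Fin 3 → ℝ) (i : Fin 3) :
    binghamZ2 μ i
      = sphereIntegral (fun m => (m i) ^ 2 * Real.exp (∑ j, μ j * (m j) ^ 2)) /
        sphereIntegral (fun m => Real.exp (∑ j, μ j * (m j) ^ 2)) := by
  rw [binghamZ2, binghamZ]
  rw [show 4 * Real.pi * ((1 / (4 * Real.pi)) *
      sphereIntegral (fun m => Real.exp (∑ j, μ j * (m j) ^ 2)))
      = sphereIntegral (fun m => Real.exp (∑ j, μ j * (m j) ^ 2)) by
    field_simp]
  rw [one_div, inv_mul_eq_div]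

lemma pw_den (β : ℝ) (hβ : 0 ≤ β) {t : ℝ} (ht : t ∈ Icc (-1:ℝ) 1) (φ : ℝ) :
    |(1:ℝ) * binghamKer β t φ - (1:ℝ) * binghamKer β 0 φ| ≤ β * t^2 := by
  simpa using binghamKer_diff β hβ ht φ

lemma pw_w0 (β : ℝ) (hβ : 0 ≤ β) {t : ℝ} (ht : t ∈ Icc (-1:ℝ) 1) (φ : ℝ) :
    |(1-t^2) * Real.cos φ^2 * binghamKer β t φ
      - (1-(0:ℝ)^2) * Real.cos φ^2 * binghamKer β 0 φ| ≤ (β+1) * t^2 := by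
  have e1 : (1-t^2) * Real.cos φ^2 * binghamKer β t φ
      - (1-(0:ℝ)^2) * Real.cos φ^2 * binghamKer β 0 φ
      = Real.cos φ^2 * ((binghamKer β t φ - binghamKer β 0 φ) - t^2 * binghamKer β t φ) := by
    ring
  rw [e1, abs_mul, abs_of_nonneg (sq_nonneg (Real.cos φ))]
  have h2 : |(binghamKer β t φ - binghamKer β 0 φ) - t^2 * binghamKer β t φ|
      ≤ β * t^2 + t^2 := by
    have htri := abs_add_le (binghamKer β t φ - binghamKer β 0 φ) (-(t^2 * binghamKer β t φ))
    rw [abs_neg, ← sub_eq_add_neg] at htri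
    have hk : |t^2 * binghamKer β t φ| ≤ t^2 := by
      rw [abs_of_nonneg (mul_nonneg (sq_nonneg t) (binghamKer_pos β t φ).le)]
      exact mul_le_of_le_one_right (sq_nonneg t) (binghamKer_le_one β hβ ht φ)
    have := binghamKer_diff β hβ ht φ
    linarith
  calc Real.cos φ^2 * |(binghamKer β t φ - binghamKer β 0 φ) - t^2 * binghamKer β t φ|
      ≤ 1 * (β * t^2 + t^2) :=
        mul_le_mul (Real.cos_sq_le_one φ) h2 (abs_nonneg _) zero_le_one
  _ = (β+1) * t^2 := by ring

lemma pw_w1 (β : ℝ) (hβ : 0 ≤ β) {t : ℝ} (ht : t ∈ Icc (-1:ℝ) 1) (φ : ℝ) :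
    |(1-t^2) * Real.sin φ^2 * binghamKer β t φ
      - (1-(0:ℝ)^2) * Real.sin φ^2 * binghamKer β 0 φ| ≤ (β+1) * t^2 := by
  have e1 : (1-t^2) * Real.sin φ^2 * binghamKer β t φ
      - (1-(0:ℝ)^2) * Real.sin φ^2 * binghamKer β 0 φ
      = Real.sin φ^2 * ((binghamKer β t φ - binghamKer β 0 φ) - t^2 * binghamKer β t φ) := by
    ring
  rw [e1, abs_mul, abs_of_nonneg (sq_nonneg (Real.sin φ))]
  have h2 : |(binghamKer β t φ - binghamKer β 0 φ) - t^2 * binghamKer β t φ|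
      ≤ β * t^2 + t^2 := by
    have htri := abs_add_le (binghamKer β t φ - binghamKer β 0 φ) (-(t^2 * binghamKer β t φ))
    rw [abs_neg, ← sub_eq_add_neg] at htri
    have hk : |t^2 * binghamKer β t φ| ≤ t^2 := by
      rw [abs_of_nonneg (mul_nonneg (sq_nonneg t) (binghamKer_pos β t φ).le)]
      exact mul_le_of_le_one_right (sq_nonneg t) (binghamKer_le_one β hβ ht φ)
    have := binghamKer_diff β hβ ht φ
    linarith
  calc Real.sin φ^2 * |(binghamKer β t φ - binghamKer β 0 φ) - t^2 * binghamKer β t φ|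
      ≤ 1 * (β * t^2 + t^2) :=
        mul_le_mul (Real.sin_sq_le_one φ) h2 (abs_nonneg _) zero_le_one
  _ = (β+1) * t^2 := by ring

lemma pw_w2 (β : ℝ) (hβ : 0 ≤ β) {t : ℝ} (ht : t ∈ Icc (-1:ℝ) 1) (φ : ℝ) :
    |t^2 * binghamKer β t φ - (0:ℝ)^2 * binghamKer β 0 φ| ≤ 1 * t^2 := by
  rw [show t^2 * binghamKer β t φ - (0:ℝ)^2 * binghamKer β 0 φ
      = t^2 * binghamKer β t φ by ring,
    abs_of_nonneg (mul_nonneg (sq_nonneg t) (binghamKer_pos β t φ).le), one_mul]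
  exact mul_le_of_le_one_right (sq_nonneg t) (binghamKer_le_one β hβ ht φ)

lemma hK_general (F G : ℝ → ℝ) (c K1 K2 : ℝ) (hc : F 0 = c * G 0)
    (h1 : ∀ t ∈ Icc (-1:ℝ) 1, |F t - F 0| ≤ K1 * t^2)
    (h2 : ∀ t ∈ Icc (-1:ℝ) 1, |G t - G 0| ≤ K2 * t^2) :
    ∀ t ∈ Icc (-1:ℝ) 1, |F t - c * G t| ≤ (K1 + |c| * K2) * t^2 := by
  intro t ht
  have e : F t - c * G t = (F t - F 0) + c * (G 0 - G t) := by rw [hc]; ring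
  rw [e]
  have h2' := h2 t ht
  rw [abs_sub_comm] at h2'
  calc |(F t - F 0) + c * (G 0 - G t)| ≤ |F t - F 0| + |c * (G 0 - G t)| := abs_add_le _ _
  _ = |F t - F 0| + |c| * |G 0 - G t| := by rw [abs_mul]
  _ ≤ K1 * t^2 + |c| * (K2 * t^2) :=
      add_le_add (h1 t ht) (mul_le_mul_of_nonneg_left h2' (abs_nonneg c))
  _ = (K1 + |c| * K2) * t^2 := by ring

/-- As one exponent of a 3D Bingham distribution tends to `−∞` along
`μ(λ) = (0, −2β, −β − λ/2)`, the second moments converge to those of a 2D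
Bingham distribution: `z₁ → 1/2 + I₁(β)/(2I₀(β))`, `z₂ → 1/2 − I₁(β)/(2I₀(β))`,
`z₃ → 0`. -/
theorem bingham_moments_degenerate_to_2d (β : ℝ) (hβ : 0 ≤ β) :
    Tendsto (fun lam : ℝ => binghamZ2 ![0, -2 * β, -β - lam / 2] 0) atTop
      (nhds (1/2 + besselI 1 β / (2 * besselI 0 β))) ∧
    Tendsto (fun lam : ℝ => binghamZ2 ![0, -2 * β, -β - lam / 2] 1) atTop
      (nhds (1/2 - besselI 1 β / (2 * besselI 0 β))) ∧
    Tendsto (fun lam : ℝ => binghamZ2 ![0, -2 * β, -β - lam / 2] 2) atTop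
      (nhds 0) := by
  have hI0 : besselI 0 β ≠ 0 := (besselI0_pos β).ne'
  have hwden : Continuous fun _p : ℝ × ℝ => (1:ℝ) := continuous_const
  have hGcont : Continuous (binghamF β (fun _ _ => 1)) := binghamF_cont _ _ hwden
  have hg₀ : (0:ℝ) < 2*Real.pi*Real.exp (-(3*β)) := by positivity
  have hGdiff : ∀ t ∈ Icc (-1:ℝ) 1, |binghamF β (fun _ _ => 1) t
      - binghamF β (fun _ _ => 1) 0| ≤ (2*Real.pi*β) * t^2 := by
    intro t ht
    have := binghamF_sub_bound β (fun _ _ => 1) hwden (β * t^2) t (fun φ => pw_den β hβ ht φ)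
    exact le_trans this (le_of_eq (by ring))
  have hden : ∀ lam : ℝ, sphereIntegral
      (fun m => Real.exp (∑ j, (![0, -2 * β, -β - lam / 2] : Fin 3 → ℝ) j * (m j)^2))
      = ∫ t in (-1:ℝ)..1, binghamF β (fun _ _ => 1) t * Real.exp (-(lam * t^2)/2) := by
    intro lam
    apply sphere_reduce β lam _ hwden
    intro θ φ
    simp only [exp_sum_eq β lam θ φ, one_mul]
  refine ⟨?_, ?_, ?_⟩
  · have hFcont : Continuous (binghamF β (fun t φ => (1-t^2) * Real.cos φ^2)) :=
      binghamF_cont _ _ (by fun_prop)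
    have hc0 : binghamF β (fun t φ => (1-t^2) * Real.cos φ^2) 0
        = (1/2 + besselI 1 β / (2 * besselI 0 β)) * binghamF β (fun _ _ => 1) 0 := by
      rw [binghamF0_val, binghamG0_val]
      field_simp
    have hFdiff : ∀ t ∈ Icc (-1:ℝ) 1, |binghamF β (fun t φ => (1-t^2) * Real.cos φ^2) t
        - binghamF β (fun t φ => (1-t^2) * Real.cos φ^2) 0| ≤ (2*Real.pi*(β+1)) * t^2 := by
      intro t ht
      have := binghamF_sub_bound β (fun t φ => (1-t^2) * Real.cos φ^2) (by fun_prop)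
        ((β+1) * t^2) t (fun φ => pw_w0 β hβ ht φ)
      exact le_trans this (le_of_eq (by ring))
    have hK0 := hK_general _ _ _ _ _ hc0 hFdiff hGdiff
    have hnum : ∀ lam : ℝ, sphereIntegral (fun m => (m 0)^2 *
        Real.exp (∑ j, (![0, -2 * β, -β - lam / 2] : Fin 3 → ℝ) j * (m j)^2))
        = ∫ t in (-1:ℝ)..1, binghamF β (fun t φ => (1-t^2) * Real.cos φ^2) t
          * Real.exp (-(lam * t^2)/2) := by
      intro lam
      apply sphere_reduce β lam _ (by fun_prop)
      intro θ φ
      simp only [Matrix.cons_val_zero, exp_sum_eq β lam θ φ]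
      linear_combination (Real.cos φ^2 *
        (binghamKer β (Real.cos θ) φ * Real.exp (-(lam * Real.cos θ^2)/2))) * Real.sin_sq θ
    have hrat := bingham_ratio_tendsto hg₀ hFcont hGcont (binghamG_lb β hβ) hK0
    exact hrat.congr fun lam => by rw [binghamZ2_eq, hden lam, hnum lam]
  · have hFcont : Continuous (binghamF β (fun t φ => (1-t^2) * Real.sin φ^2)) :=
      binghamF_cont _ _ (by fun_prop)
    have hc1 : binghamF β (fun t φ => (1-t^2) * Real.sin φ^2) 0
        = (1/2 - besselI 1 β / (2 * besselI 0 β)) * binghamF β (fun _ _ => 1) 0 := by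
      rw [binghamF1_val, binghamG0_val]
      field_simp
    have hFdiff : ∀ t ∈ Icc (-1:ℝ) 1, |binghamF β (fun t φ => (1-t^2) * Real.sin φ^2) t
        - binghamF β (fun t φ => (1-t^2) * Real.sin φ^2) 0| ≤ (2*Real.pi*(β+1)) * t^2 := by
      intro t ht
      have := binghamF_sub_bound β (fun t φ => (1-t^2) * Real.sin φ^2) (by fun_prop)
        ((β+1) * t^2) t (fun φ => pw_w1 β hβ ht φ)
      exact le_trans this (le_of_eq (by ring))
    have hK1 := hK_general _ _ _ _ _ hc1 hFdiff hGdiff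
    have hnum : ∀ lam : ℝ, sphereIntegral (fun m => (m 1)^2 *
        Real.exp (∑ j, (![0, -2 * β, -β - lam / 2] : Fin 3 → ℝ) j * (m j)^2))
        = ∫ t in (-1:ℝ)..1, binghamF β (fun t φ => (1-t^2) * Real.sin φ^2) t
          * Real.exp (-(lam * t^2)/2) := by
      intro lam
      apply sphere_reduce β lam _ (by fun_prop)
      intro θ φ
      simp only [Matrix.cons_val_one, Matrix.head_cons, Matrix.cons_val_zero, exp_sum_eq β lam θ φ]
      linear_combination (Real.sin φ^2 *
        (binghamKer β (Real.cos θ) φ * Real.exp (-(lam * Real.cos θ^2)/2))) * Real.sin_sq θ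
    have hrat := bingham_ratio_tendsto hg₀ hFcont hGcont (binghamG_lb β hβ) hK1
    exact hrat.congr fun lam => by rw [binghamZ2_eq, hden lam, hnum lam]
  · have hFcont : Continuous (binghamF β (fun t _ => t^2)) :=
      binghamF_cont _ _ (by fun_prop)
    have hc2 : binghamF β (fun t _ => t^2) 0 = 0 * binghamF β (fun _ _ => 1) 0 := by
      rw [binghamF2_val]; ring
    have hFdiff : ∀ t ∈ Icc (-1:ℝ) 1, |binghamF β (fun t _ => t^2) t
        - binghamF β (fun t _ => t^2) 0| ≤ (2*Real.pi*1) * t^2 := by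
      intro t ht
      have := binghamF_sub_bound β (fun t _ => t^2) (by fun_prop)
        (1 * t^2) t (fun φ => pw_w2 β hβ ht φ)
      exact le_trans this (le_of_eq (by ring))
    have hK2 := hK_general _ _ _ _ _ hc2 hFdiff hGdiff
    have hnum : ∀ lam : ℝ, sphereIntegral (fun m => (m 2)^2 *
        Real.exp (∑ j, (![0, -2 * β, -β - lam / 2] : Fin 3 → ℝ) j * (m j)^2))
        = ∫ t in (-1:ℝ)..1, binghamF β (fun t _ => t^2) t * Real.exp (-(lam * t^2)/2) := by
      intro lam
      apply sphere_reduce β lam _ (by fun_prop)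
      intro θ φ
      simp only [Matrix.cons_val_two, Matrix.tail_cons, Matrix.head_cons, exp_sum_eq β lam θ φ]
      ring
    have hrat := bingham_ratio_tendsto hg₀ hFcont hGcont (binghamG_lb β hβ) hK2
    exact hrat.congr fun lam => by rw [binghamZ2_eq, hden lam, hnum lam]
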